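/- (Sufficiency form of Theorem 3.) Let ω_1 ≤ ω_2 ≤ … ≤ ω_N be real numbers and define, for each i ∈ {1,…,N}, ℓ_i = τ·√(η h'_i · max(ω_i, 0)/(3 ζ C³)) and d_i = τ B · log₂( max( ω_i · B η h'_i g_i/(σ² ln 2), 1 ) ). Suppose (ℓ, d) satisfies the task-causality constraints Σ_{j=1}^i (ℓ_j + d_j) ≤ Σ_{j=1}^i A_j for every i ∈ {1,…,N−1} and the task-completion constraint Σ_{j=1}^N (ℓ_j + d_j) = Σ_{j=1}^N A_j, and suppose that for every i ∈ {1,…,N−1} with ω_i < ω_{i+1} the constraint at slot i is tight: Σ_{j=1}^i (ℓ_j + d_j) = Σ_{j=1}^i A_j. Then (ℓ, d) is an optimal solution of problem (P1.1). -/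

import Mathlib

open Finset

/-- Local-computing energy: `E_loc(x) = ζ C³ x³ / τ²`. -/
noncomputable def Eloc (ζ C τ x : ℝ) : ℝ := ζ * C ^ 3 * x ^ 3 / τ ^ 2

/-- Offloading energy at a slot with channel gain `g`: `E_off(x) = (τσ²/g)(2^{x/(τB)} − 1)`. -/
noncomputable def Eoff (τ σ2 g B x : ℝ) : ℝ := τ * σ2 / g * ((2 : ℝ) ^ (x / (τ * B)) - 1)

/-- Feasibility for problem (P1.1): nonnegativity, task causality, task completion. -/
def FeasP11 (N : ℕ) (A ℓ d : ℕ → ℝ) : Prop :=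
  (∀ i ∈ Finset.Icc 1 N, 0 ≤ ℓ i ∧ 0 ≤ d i) ∧
  (∀ i ∈ Finset.Icc 1 (N - 1),
    ∑ j ∈ Finset.Icc 1 i, (ℓ j + d j) ≤ ∑ j ∈ Finset.Icc 1 i, A j) ∧
  ∑ j ∈ Finset.Icc 1 N, (ℓ j + d j) = ∑ j ∈ Finset.Icc 1 N, A j

/-- Minimization of the cubic part: `s = √(max ω 0 / (3a))` minimizes `a x³ − ω x` over `x ≥ 0`. -/
lemma cubic_min (a ω s x : ℝ) (ha : 0 < a) (hx : 0 ≤ x) (hs0 : 0 ≤ s)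
    (hs2 : 3 * a * s ^ 2 = max ω 0) (hωs : ω * s = max ω 0 * s) :
    a * s ^ 3 - ω * s ≤ a * x ^ 3 - ω * x := by
  have hm : ω ≤ max ω 0 := le_max_left _ _
  nlinarith [mul_nonneg (mul_nonneg ha.le (sq_nonneg (x - s))) (by linarith : (0:ℝ) ≤ x + 2 * s),
    mul_nonneg (sub_nonneg.2 hm) hx]

/-- Minimization of the exponential part over `x ≥ 0`. -/
lemma off_min (b T ω t x : ℝ) (hb : 0 < b) (hT : 0 < T) (hx : 0 ≤ x)
    (ht : t = T * Real.logb 2 (max (ω * T / (b * Real.log 2)) 1)) :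
    b * ((2:ℝ) ^ (t / T) - 1) - ω * t ≤ b * ((2:ℝ) ^ (x / T) - 1) - ω * x := by
  have hlog2 : 0 < Real.log 2 := Real.log_pos (by norm_num)
  set M := max (ω * T / (b * Real.log 2)) 1 with hM
  have hM1 : (1:ℝ) ≤ M := le_max_right _ _
  have hMpos : (0:ℝ) < M := lt_of_lt_of_le one_pos hM1
  set u := Real.logb 2 M with hu
  have hu0 : 0 ≤ u := Real.logb_nonneg (by norm_num) hM1
  have h2u : (2:ℝ) ^ u = M := Real.rpow_logb two_pos (by norm_num) hMpos
  have htT : t / T = u := by rw [ht]; field_simp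
  have hbM : ω * T ≤ b * Real.log 2 * M := by
    have h1 := le_max_left (ω * T / (b * Real.log 2)) 1
    calc ω * T = (ω * T / (b * Real.log 2)) * (b * Real.log 2) := by field_simp
    _ ≤ M * (b * Real.log 2) := mul_le_mul_of_nonneg_right h1 (by positivity)
    _ = b * Real.log 2 * M := by ring
  have hslack : (b * Real.log 2 * M - ω * T) * u = 0 := by
    rcases le_total (ω * T / (b * Real.log 2)) 1 with hc | hc
    · have hM1' : M = 1 := max_eq_right hc
      rw [hu, hM1', Real.logb_one, mul_zero]
    · have hMe : M = ω * T / (b * Real.log 2) := max_eq_left hc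
      have hz : b * Real.log 2 * M = ω * T := by
        rw [hMe]; field_simp
      rw [hz, sub_self, zero_mul]
  set y := x / T with hy'
  have hy : 0 ≤ y := div_nonneg hx hT.le
  have hxe : x = T * y := by rw [hy']; field_simp
  have hkey : (2:ℝ) ^ u * (1 + Real.log 2 * (y - u)) ≤ (2:ℝ) ^ y := by
    rw [Real.rpow_def_of_pos two_pos, Real.rpow_def_of_pos two_pos]
    have h1 : Real.log 2 * y = Real.log 2 * u + Real.log 2 * (y - u) := by ring
    rw [h1, Real.exp_add]
    have h2 : 1 + Real.log 2 * (y - u) ≤ Real.exp (Real.log 2 * (y - u)) := by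
      have := Real.add_one_le_exp (Real.log 2 * (y - u)); linarith
    exact mul_le_mul_of_nonneg_left h2 (Real.exp_nonneg _)
  rw [htT, h2u, ht, hxe]
  have hkey2 := mul_le_mul_of_nonneg_left hkey hb.le
  rw [h2u] at hkey2
  have h3 : 0 ≤ (b * Real.log 2 * M - ω * T) * y :=
    mul_nonneg (sub_nonneg.2 hbM) hy
  nlinarith [hkey2, hslack, h3]

/-- Abel summation over `Icc 1 N`. -/
lemma abel_sum (ω x : ℕ → ℝ) : ∀ N : ℕ, ∑ i ∈ Icc 1 N, ω i * x i
    = ω N * (∑ j ∈ Icc 1 N, x j)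
      - ∑ i ∈ Icc 1 (N - 1), (ω (i + 1) - ω i) * (∑ j ∈ Icc 1 i, x j) := by
  intro N
  induction N with
  | zero => simp
  | succ n ih =>
    rw [Finset.sum_Icc_succ_top (by omega : 1 ≤ n + 1), ih]
    cases n with
    | zero => simp
    | succ m =>
      have e1 : (m + 1 + 1) - 1 = m + 1 := rfl
      have e2 : (m + 1) - 1 = m := rfl
      rw [e1, e2,
        Finset.sum_Icc_succ_top (show 1 ≤ m + 1 by omega)
          (fun i => (ω (i + 1) - ω i) * ∑ j ∈ Icc 1 i, x j),
        Finset.sum_Icc_succ_top (show 1 ≤ m + 1 by omega) x,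
        Finset.sum_Icc_succ_top (show 1 ≤ m + 1 + 1 by omega) x,
        Finset.sum_Icc_succ_top (show 1 ≤ m + 1 by omega) x]
      ring

/-- If the weights are nondecreasing, strict-increase slots are tight, the competitor satisfies
causality, and total amounts agree, then the weighted sum of the candidate dominates. -/
lemma sum_weight_le (ω x x' A : ℕ → ℝ) (N : ℕ)
    (hmono : ∀ i ∈ Icc 1 (N - 1), ω i ≤ ω (i + 1))
    (hle : ∀ i ∈ Icc 1 (N - 1), ∑ j ∈ Icc 1 i, x' j ≤ ∑ j ∈ Icc 1 i, A j)
    (htight : ∀ i ∈ Icc 1 (N - 1), ω i < ω (i + 1) →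
      ∑ j ∈ Icc 1 i, x j = ∑ j ∈ Icc 1 i, A j)
    (hend : ∑ j ∈ Icc 1 N, x j = ∑ j ∈ Icc 1 N, x' j) :
    ∑ i ∈ Icc 1 N, ω i * x i ≤ ∑ i ∈ Icc 1 N, ω i * x' i := by
  rw [abel_sum ω x N, abel_sum ω x' N, hend]
  apply sub_le_sub_left
  apply Finset.sum_le_sum
  intro i hi
  rcases lt_or_eq_of_le (hmono i hi) with hlt | heq
  · have h1 := htight i hi hlt
    have h2 := hle i hi
    have hc : 0 ≤ ω (i + 1) - ω i := by linarith
    apply mul_le_mul_of_nonneg_left _ hc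
    rw [h1]; exact h2
  · rw [← heq, sub_self, zero_mul, zero_mul]

/-- Sufficiency form of Theorem 3: a feasible allocation of the stated closed form,
driven by nondecreasing computation levels `ω` whose increase slots have tight task
causality, is optimal for (P1.1). -/
theorem stmt_14
    (N : ℕ) (hN : 0 < N)
    (τ η ζ C σ2 B : ℝ)
    (hτ : 0 < τ) (hη : 0 < η) (hζ : 0 < ζ) (hC : 0 < C) (hσ2 : 0 < σ2) (hB : 0 < B)
    (h g : ℕ → ℝ)
    (hhpos : ∀ i ∈ Finset.Icc 1 N, 0 < h i) (hgpos : ∀ i ∈ Finset.Icc 1 N, 0 < g i)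
    (h' : ℕ → ℝ)
    (hh' : ∀ i ∈ Finset.Icc 1 N,
      (∃ j ∈ Finset.Icc 1 i, h' i = h j) ∧ ∀ j ∈ Finset.Icc 1 i, h j ≤ h' i)
    (A : ℕ → ℝ) (hA : ∀ i ∈ Finset.Icc 1 N, 0 ≤ A i)
    (ω : ℕ → ℝ) (hω : ∀ i ∈ Finset.Icc 1 (N - 1), ω i ≤ ω (i + 1))
    (ℓ d : ℕ → ℝ)
    (hℓ : ∀ i ∈ Finset.Icc 1 N,
      ℓ i = τ * Real.sqrt (η * h' i * max (ω i) 0 / (3 * ζ * C ^ 3)))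
    (hd : ∀ i ∈ Finset.Icc 1 N,
      d i = τ * B * Real.logb 2 (max (ω i * (B * η * h' i * g i) / (σ2 * Real.log 2)) 1))
    (hfeas : FeasP11 N A ℓ d)
    (htight : ∀ i ∈ Finset.Icc 1 (N - 1), ω i < ω (i + 1) →
      ∑ j ∈ Finset.Icc 1 i, (ℓ j + d j) = ∑ j ∈ Finset.Icc 1 i, A j) :
    ∀ ℓ' d' : ℕ → ℝ, FeasP11 N A ℓ' d' →
      ∑ i ∈ Finset.Icc 1 N, 1 / (η * h' i) * (Eloc ζ C τ (ℓ i) + Eoff τ σ2 (g i) B (d i))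
        ≤ ∑ i ∈ Finset.Icc 1 N, 1 / (η * h' i) * (Eloc ζ C τ (ℓ' i) + Eoff τ σ2 (g i) B (d' i)) := by
  intro ℓ' d' hfeas'
  obtain ⟨hnn, hcaus, hcomp⟩ := hfeas
  obtain ⟨hnn', hcaus', hcomp'⟩ := hfeas'
  have hl2 : (0:ℝ) < Real.log 2 := Real.log_pos (by norm_num)
  have h'pos : ∀ i ∈ Finset.Icc 1 N, 0 < h' i := by
    intro i hi
    obtain ⟨⟨j, hj, hej⟩, _⟩ := hh' i hi
    rw [hej]
    apply hhpos
    simp only [Finset.mem_Icc] at hi hj ⊢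
    omega
  have key : ∀ i ∈ Finset.Icc 1 N,
      1 / (η * h' i) * (Eloc ζ C τ (ℓ i) + Eoff τ σ2 (g i) B (d i)) - ω i * (ℓ i + d i)
      ≤ 1 / (η * h' i) * (Eloc ζ C τ (ℓ' i) + Eoff τ σ2 (g i) B (d' i))
          - ω i * (ℓ' i + d' i) := by
    intro i hi
    have hh'i := h'pos i hi
    have hgi := hgpos i hi
    set a := ζ * C ^ 3 / (τ ^ 2 * (η * h' i)) with ha
    set b := τ * σ2 / (g i * (η * h' i)) with hb
    have hapos : 0 < a := by positivity
    have hbpos : 0 < b := by positivity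
    have expand : ∀ z w : ℝ,
        1 / (η * h' i) * (Eloc ζ C τ z + Eoff τ σ2 (g i) B w)
          = a * z ^ 3 + b * ((2:ℝ) ^ (w / (τ * B)) - 1) := by
      intro z w
      rw [Eloc, Eoff, ha, hb]
      field_simp
    have hc : a * (ℓ i) ^ 3 - ω i * ℓ i ≤ a * (ℓ' i) ^ 3 - ω i * ℓ' i := by
      apply cubic_min a (ω i) (ℓ i) (ℓ' i) hapos (hnn' i hi).1
      · rw [hℓ i hi]; positivity
      · rw [hℓ i hi, mul_pow, Real.sq_sqrt]
        · rw [ha]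
          field_simp
        · exact div_nonneg (mul_nonneg (by positivity) (le_max_right _ _)) (by positivity)
      · rcases le_or_gt 0 (ω i) with h0 | h0
        · rw [max_eq_left h0]
        · have hz : ℓ i = 0 := by
            rw [hℓ i hi, max_eq_right h0.le, mul_zero, zero_div, Real.sqrt_zero, mul_zero]
          rw [hz, mul_zero, mul_zero]
    have ho : b * ((2:ℝ) ^ (d i / (τ * B)) - 1) - ω i * d i
        ≤ b * ((2:ℝ) ^ (d' i / (τ * B)) - 1) - ω i * d' i := by
      apply off_min b (τ * B) (ω i) (d i) (d' i) hbpos (by positivity) (hnn' i hi).2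
      rw [hd i hi]
      have harg : ω i * (B * η * h' i * g i) / (σ2 * Real.log 2)
          = ω i * (τ * B) / (b * Real.log 2) := by
        rw [hb]
        field_simp
      rw [harg]
    rw [expand, expand]
    linarith
  have hsum1 := Finset.sum_le_sum key
  rw [Finset.sum_sub_distrib, Finset.sum_sub_distrib] at hsum1
  have hsum2 : ∑ i ∈ Finset.Icc 1 N, ω i * (ℓ i + d i)
      ≤ ∑ i ∈ Finset.Icc 1 N, ω i * (ℓ' i + d' i) := by
    have := sum_weight_le ω (fun j => ℓ j + d j) (fun j => ℓ' j + d' j) A N hω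
      (by simpa using hcaus') (by simpa using htight) (by beta_reduce; rw [hcomp, hcomp'])
    simpa using this
  linarith
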